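/- Let k be a commutative unital ring, N ≥ 1, and let G = ℤ^N be the free abelian group of rank N (written multiplicatively). For every d ∈ ℕ, the quotient k-module I_k(G)^d / I_k(G)^{d+1} of successive powers of the augmentation ideal of k[G] is a free k-module of rank C(N+d−1, d), the number of ordered N-tuples of natural numbers summing to d. -/

import Mathlib

noncomputable section AugAux13

open MonoidAlgebra

-- generic lemma: product of powers of elements of a submodule lies in the power
lemma aug13_prod_pow_mem {R : Type*} {B : Type*} [CommSemiring R] [CommSemiring B]
    [Algebra R B] (J : Submodule R B) {ι : Type*} (s : Finset ι) (x : ι → B)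
    (hx : ∀ i ∈ s, x i ∈ J) (a : ι → ℕ) :
    (∏ i ∈ s, x i ^ a i) ∈ J ^ (∑ i ∈ s, a i) := by
  classical
  induction s using Finset.induction with
  | empty => simpa using (Submodule.one_le.mp le_rfl : (1 : B) ∈ (1 : Submodule R B))
  | @insert i s his ih =>
      rw [Finset.prod_insert his, Finset.sum_insert his, pow_add]
      exact Submodule.mul_mem_mul (Submodule.pow_mem_pow J (hx i (Finset.mem_insert_self i s)) _)
        (ih fun j hj => hx j (Finset.mem_insert_of_mem hj))

variable (k : Type*) [CommRing k] (N : ℕ)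

local notation "G" => Multiplicative (Fin N → ℤ)
local notation "A" => MonoidAlgebra k (Multiplicative (Fin N → ℤ))

/-- augmentation as algebra hom -/
def aug13eps : MonoidAlgebra k (Multiplicative (Fin N → ℤ)) →ₐ[k] k :=
  MonoidAlgebra.lift k k (Multiplicative (Fin N → ℤ)) 1

/-- augmentation ideal as an ideal -/
def aug13I : Ideal (MonoidAlgebra k (Multiplicative (Fin N → ℤ))) :=
  RingHom.ker (aug13eps k N)

lemma aug13_rs_pow (n : ℕ) :
    (Submodule.restrictScalars k (aug13I k N)) ^ (n + 1)
      = Submodule.restrictScalars k ((aug13I k N) ^ (n + 1)) := by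
  induction n with
  | zero => simp [pow_one]
  | succ n ih => rw [pow_succ, ih, ← Ideal.restrictScalars_mul, ← pow_succ]

lemma aug13eps_single (g : G) : aug13eps k N (MonoidAlgebra.single g 1) = 1 := by
  simp [aug13eps]

lemma aug13eps_of (g : G) : aug13eps k N (MonoidAlgebra.of k G g) = 1 := by
  simp [aug13eps]

lemma aug13eps_apply (f : A) : aug13eps k N f = ∑ g ∈ f.coeff.support, f.coeff g := by
  rw [aug13eps, MonoidAlgebra.lift_apply]
  simp [Finsupp.sum]

lemma aug13_of_sub_one_mem (g : G) : MonoidAlgebra.of k G g - 1 ∈ aug13I k N := by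
  have h := aug13eps_single k N g
  simp [aug13I, RingHom.mem_ker, map_sub, h, MonoidAlgebra.of_apply]

lemma aug13I_le_span :
    Submodule.restrictScalars k (aug13I k N)
      ≤ Submodule.span k (Set.range fun g : G => (MonoidAlgebra.of k G g : A) - 1) := by
  intro f hf
  have hker : aug13eps k N f = 0 := hf
  have hsum : ∑ g ∈ f.coeff.support, f.coeff g = 0 := by rw [← aug13eps_apply]; exact hker
  have hrepr : f = ∑ g ∈ f.coeff.support, f.coeff g • ((MonoidAlgebra.of k G g : A) - 1) := by
    have h1 : (∑ g ∈ f.coeff.support, f.coeff g • ((MonoidAlgebra.of k G g : A) - 1))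
        = (∑ g ∈ f.coeff.support, f.coeff g • (MonoidAlgebra.of k G g : A))
          - (∑ g ∈ f.coeff.support, f.coeff g) • (1 : A) := by
      rw [Finset.sum_smul]
      rw [← Finset.sum_sub_distrib]
      simp [smul_sub]
    rw [h1, hsum, zero_smul, sub_zero]
    conv_lhs => rw [← MonoidAlgebra.sum_coeff_single f]
    rw [Finsupp.sum]
    refine Finset.sum_congr rfl fun g hg => ?_
    rw [MonoidAlgebra.of_apply, MonoidAlgebra.smul_single', mul_one]
  rw [hrepr]
  exact Submodule.sum_mem _ fun g hg =>
    Submodule.smul_mem _ _ (Submodule.subset_span ⟨g, rfl⟩)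

/-- the generators `x_i` -/
def aug13X (i : Fin N) : A := MonoidAlgebra.of k G (Multiplicative.ofAdd (Pi.single i 1))

lemma aug13X_sub_one_mem (i : Fin N) : aug13X k N i - 1 ∈ aug13I k N :=
  aug13_of_sub_one_mem k N _

/-- basic monomials in the `x_i - 1` -/
def aug13v (a : Fin N → ℕ) : A := ∏ i, (aug13X k N i - 1) ^ a i

/-- span of monomials of total degree `d` -/
def aug13V (d : ℕ) : Submodule k (MonoidAlgebra k (Multiplicative (Fin N → ℤ))) :=
  Submodule.span k ((fun a : Fin N → ℕ => aug13v k N a) '' {a | ∑ i, a i = d})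

lemma aug13v_mem (a : Fin N → ℕ) :
    aug13v k N a ∈ (Submodule.restrictScalars k (aug13I k N)) ^ (∑ i, a i) :=
  aug13_prod_pow_mem (Submodule.restrictScalars k (aug13I k N)) Finset.univ _ (fun i _ => aug13X_sub_one_mem k N i) a

lemma aug13V_le_pow (d : ℕ) :
    aug13V k N d ≤ (Submodule.restrictScalars k (aug13I k N)) ^ d := by
  rw [aug13V, Submodule.span_le]
  rintro x ⟨a, ha, rfl⟩
  simpa [Set.mem_setOf_eq.mp ha] using aug13v_mem k N a

/-- key first-order approximation: `g - 1 ≡ ∑ zᵢ (xᵢ - 1) mod I²` -/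
lemma aug13_of_sub_one_mod_sq (z : Fin N → ℤ) :
    MonoidAlgebra.of k G (Multiplicative.ofAdd z) - 1
      - ∑ i, z i • (aug13X k N i - 1) ∈ (aug13I k N) ^ 2 := by
  classical
  set Iq : Ideal (MonoidAlgebra k (Multiplicative (Fin N → ℤ))) := (aug13I k N) ^ 2 with hIq
  set mk := Ideal.Quotient.mk Iq with hmk
  have hmul : ∀ a b : Fin N → ℤ,
      mk (MonoidAlgebra.of k G (Multiplicative.ofAdd (a + b)) - 1)
        = mk (MonoidAlgebra.of k G (Multiplicative.ofAdd a) - 1)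
          + mk (MonoidAlgebra.of k G (Multiplicative.ofAdd b) - 1) := by
    intro a b
    have hofab : MonoidAlgebra.of k G (Multiplicative.ofAdd (a + b))
        = MonoidAlgebra.of k G (Multiplicative.ofAdd a) * MonoidAlgebra.of k G (Multiplicative.ofAdd b) := by
      rw [← map_mul]; rfl
    rw [← map_add, Ideal.Quotient.eq, hofab]
    have hring : MonoidAlgebra.of k G (Multiplicative.ofAdd a) * MonoidAlgebra.of k G (Multiplicative.ofAdd b) - 1
        - (MonoidAlgebra.of k G (Multiplicative.ofAdd a) - 1 + (MonoidAlgebra.of k G (Multiplicative.ofAdd b) - 1))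
        = (MonoidAlgebra.of k G (Multiplicative.ofAdd a) - 1) * (MonoidAlgebra.of k G (Multiplicative.ofAdd b) - 1) := by
      ring
    rw [hring, hIq, sq]
    exact Ideal.mul_mem_mul (aug13_of_sub_one_mem k N _) (aug13_of_sub_one_mem k N _)
  let δ : (Fin N → ℤ) →+ (MonoidAlgebra k (Multiplicative (Fin N → ℤ)) ⧸ Iq) :=
    AddMonoidHom.mk' (fun z => mk (MonoidAlgebra.of k G (Multiplicative.ofAdd z) - 1)) hmul
  have hδ : δ z = ∑ i, z i • δ (Pi.single i (1 : ℤ)) := by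
    conv_lhs => rw [show z = ∑ i, Pi.single i (z i) from (Finset.univ_sum_single z).symm, map_sum]
    refine Finset.sum_congr rfl fun i _ => ?_
    have hz : (Pi.single i (z i) : Fin N → ℤ) = z i • (Pi.single i 1 : Fin N → ℤ) := by
      ext j; by_cases h : j = i <;> simp [h, Pi.single_apply]
    rw [hz, map_zsmul]
  have hfin : mk (MonoidAlgebra.of k G (Multiplicative.ofAdd z) - 1)
      = mk (∑ i, z i • (aug13X k N i - 1)) := by
    have h2 : mk (∑ i, z i • (aug13X k N i - 1)) = ∑ i, z i • δ (Pi.single i (1 : ℤ)) := by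
      rw [map_sum]
      refine Finset.sum_congr rfl fun i _ => ?_
      rw [map_zsmul]
      rfl
    rw [h2]
    exact hδ
  rwa [Ideal.Quotient.eq] at hfin

lemma aug13v_single (i : Fin N) : aug13v k N (Pi.single i 1) = aug13X k N i - 1 := by
  rw [aug13v, Finset.prod_eq_single i
    (fun j _ hj => by rw [Pi.single_eq_of_ne hj, pow_zero]) (by simp)]
  rw [Pi.single_eq_same, pow_one]

lemma aug13v_mul (a b : Fin N → ℕ) :
    aug13v k N a * aug13v k N b = aug13v k N (a + b) := by
  rw [aug13v, aug13v, aug13v, ← Finset.prod_mul_distrib]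
  exact Finset.prod_congr rfl fun i _ => by rw [← pow_add]; rfl

lemma aug13V_mul_le (c d : ℕ) : aug13V k N c * aug13V k N d ≤ aug13V k N (c + d) := by
  rw [aug13V, aug13V, Submodule.span_mul_span, Submodule.span_le]
  rintro x hx
  rw [Set.mem_mul] at hx
  obtain ⟨u, hu, w, hw, rfl⟩ := hx
  obtain ⟨a, ha, rfl⟩ := hu
  obtain ⟨b, hb, rfl⟩ := hw
  rw [aug13v_mul]
  exact Submodule.subset_span ⟨a + b, by
    simp only [Set.mem_setOf_eq] at ha hb ⊢
    simp only [Pi.add_apply]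
    rw [Finset.sum_add_distrib, ha, hb], rfl⟩

lemma aug13_base :
    Submodule.restrictScalars k (aug13I k N)
      ≤ aug13V k N 1 ⊔ Submodule.restrictScalars k ((aug13I k N) ^ 2) := by
  refine le_trans (aug13I_le_span k N) (Submodule.span_le.mpr ?_)
  rintro x ⟨g, rfl⟩
  have hmod := aug13_of_sub_one_mod_sq k N (Multiplicative.toAdd g)
  have hg : Multiplicative.ofAdd (Multiplicative.toAdd g) = g := rfl
  rw [hg] at hmod
  simp only [SetLike.mem_coe]
  show (MonoidAlgebra.of k G g : A) - 1 ∈ _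
  have hdecomp : MonoidAlgebra.of k G g - 1
      = (MonoidAlgebra.of k G g - 1 - ∑ i, Multiplicative.toAdd g i • (aug13X k N i - 1))
        + ∑ i, Multiplicative.toAdd g i • (aug13X k N i - 1) := by ring
  rw [hdecomp]
  refine Submodule.add_mem _ (Submodule.mem_sup_right hmod) (Submodule.mem_sup_left ?_)
  refine Submodule.sum_mem _ fun i _ => zsmul_mem ?_ _
  refine Submodule.subset_span ⟨Pi.single i 1, ?_, aug13v_single k N i⟩
  simp [Finset.sum_pi_single']

lemma aug13_pow_le (d : ℕ) :
    Submodule.restrictScalars k (aug13I k N) ^ (d + 1)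
      ≤ aug13V k N (d + 1) ⊔ Submodule.restrictScalars k ((aug13I k N) ^ (d + 2)) := by
  induction d with
  | zero => rw [pow_one]; exact aug13_base k N
  | succ d ih =>
      have hIJ : Submodule.restrictScalars k (aug13I k N) ^ (d + 1 + 1)
          = Submodule.restrictScalars k (aug13I k N) ^ (d + 1)
            * Submodule.restrictScalars k (aug13I k N) := pow_succ _ _
      rw [hIJ]
      refine le_trans (mul_le_mul' ih (aug13_base k N)) ?_
      rw [Submodule.sup_mul, Submodule.mul_sup, Submodule.mul_sup]
      have h1 : aug13V k N (d + 1) * aug13V k N 1 ≤ aug13V k N (d + 2) :=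
        aug13V_mul_le k N (d + 1) 1
      have hVpow : ∀ m : ℕ, aug13V k N m ≤ Submodule.restrictScalars k (aug13I k N) ^ m :=
        aug13V_le_pow k N
      have h2 : aug13V k N (d + 1) * Submodule.restrictScalars k ((aug13I k N) ^ 2)
          ≤ Submodule.restrictScalars k ((aug13I k N) ^ (d + 3)) := by
        rw [← aug13_rs_pow k N 1, ← aug13_rs_pow k N (d + 2)]
        refine le_trans (mul_le_mul' (hVpow (d + 1)) le_rfl) ?_
        rw [← pow_add]
      have h3 : Submodule.restrictScalars k ((aug13I k N) ^ (d + 2)) * aug13V k N 1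
          ≤ Submodule.restrictScalars k ((aug13I k N) ^ (d + 3)) := by
        rw [← aug13_rs_pow k N (d + 1), ← aug13_rs_pow k N (d + 2)]
        refine le_trans (mul_le_mul' le_rfl (hVpow 1)) ?_
        rw [← pow_add]
      have h4 : Submodule.restrictScalars k ((aug13I k N) ^ (d + 2))
            * Submodule.restrictScalars k ((aug13I k N) ^ 2)
          ≤ Submodule.restrictScalars k ((aug13I k N) ^ (d + 3)) := by
        rw [← Ideal.restrictScalars_mul, ← pow_add]
        exact fun x hx => Ideal.pow_le_pow_right (by omega) hx
      refine sup_le (sup_le ?_ ?_) (sup_le ?_ ?_)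
      · exact le_trans h1 le_sup_left
      · exact le_trans h2 le_sup_right
      · exact le_trans h3 le_sup_right
      · exact le_trans h4 le_sup_right

lemma aug13u_isUnit (i : Fin N) :
    IsUnit ((1 : MvPowerSeries (Fin N) k) + MvPowerSeries.X i) := by
  rw [MvPowerSeries.isUnit_iff_constantCoeff, map_add, map_one,
    MvPowerSeries.constantCoeff_X, add_zero]
  exact isUnit_one

/-- `1 + Xᵢ` as a unit of the power series ring -/
def aug13u (i : Fin N) : (MvPowerSeries (Fin N) k)ˣ :=
  (aug13u_isUnit k N i).unit

lemma aug13u_spec (i : Fin N) :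
    (aug13u k N i : MvPowerSeries (Fin N) k) = 1 + MvPowerSeries.X i :=
  (aug13u_isUnit k N i).unit_spec

/-- the group homomorphism `ℤ^N → units` -/
def aug13U : G →* (MvPowerSeries (Fin N) k)ˣ :=
  MonoidHom.mk' (fun g => ∏ i, aug13u k N i ^ (Multiplicative.toAdd g i))
    (by
      intro g h
      have : ∀ i, Multiplicative.toAdd (g * h) i
          = Multiplicative.toAdd g i + Multiplicative.toAdd h i := fun i => rfl
      simp_rw [this, zpow_add]
      rw [Finset.prod_mul_distrib])

lemma aug13U_single (i : Fin N) :
    aug13U k N (Multiplicative.ofAdd (Pi.single i 1)) = aug13u k N i := by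
  show (∏ j, aug13u k N j ^ ((Pi.single i 1 : Fin N → ℤ) j)) = aug13u k N i
  rw [Finset.prod_eq_single i
    (fun j _ hj => by rw [Pi.single_eq_of_ne hj, zpow_zero]) (by simp)]
  rw [Pi.single_eq_same, zpow_one]

/-- the algebra map to power series sending `xᵢ ↦ 1 + Xᵢ` -/
def aug13phi : MonoidAlgebra k (Multiplicative (Fin N → ℤ)) →ₐ[k] MvPowerSeries (Fin N) k :=
  MonoidAlgebra.lift k (MvPowerSeries (Fin N) k) G
    ((Units.coeHom (MvPowerSeries (Fin N) k)).comp (aug13U k N))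

lemma aug13phi_of (g : G) :
    aug13phi k N (MonoidAlgebra.of k G g) = (aug13U k N g : MvPowerSeries (Fin N) k) := by
  rw [aug13phi, MonoidAlgebra.lift_of]; rfl

lemma aug13phi_X (i : Fin N) :
    aug13phi k N (aug13X k N i) = 1 + MvPowerSeries.X i := by
  rw [aug13X, aug13phi_of, aug13U_single, aug13u_spec]

lemma aug13_cc_U (g : G) :
    (MvPowerSeries.constantCoeff (σ := Fin N) (R := k)) (aug13U k N g : MvPowerSeries (Fin N) k) = 1 := by
  have h1 : ∀ i, Units.map ((MvPowerSeries.constantCoeff (σ := Fin N) (R := k))).toMonoidHom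
      (aug13u k N i) = 1 := by
    intro i
    ext
    rw [Units.coe_map]
    show (MvPowerSeries.constantCoeff (σ := Fin N) (R := k)) (aug13u k N i) = 1
    rw [aug13u_spec]
    simp
  have h2 : Units.map ((MvPowerSeries.constantCoeff (σ := Fin N) (R := k))).toMonoidHom (aug13U k N g) = 1 := by
    show Units.map _ (∏ i, aug13u k N i ^ (Multiplicative.toAdd g i)) = 1
    rw [map_prod]
    refine Finset.prod_eq_one fun i _ => ?_
    rw [map_zpow, h1 i, one_zpow]
  have := congrArg (Units.val) h2
  rwa [Units.coe_map] at this

lemma aug13_cc_phi (f : A) :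
    (MvPowerSeries.constantCoeff (σ := Fin N) (R := k)) (aug13phi k N f) = aug13eps k N f := by
  have hext : ((MvPowerSeries.constantCoeff (σ := Fin N) (R := k))).comp (aug13phi k N).toRingHom
      = (aug13eps k N).toRingHom := by
    apply MonoidAlgebra.ringHom_ext
    · intro b
      show (MvPowerSeries.constantCoeff (σ := Fin N) (R := k)) (aug13phi k N (MonoidAlgebra.single 1 b)) = _
      have : (MonoidAlgebra.single (1 : G) b : A) = algebraMap k _ b := by
        rw [MonoidAlgebra.coe_algebraMap]; rfl
      rw [this, AlgHom.commutes]
      have h2 : (aug13eps k N).toRingHom (algebraMap k (MonoidAlgebra k (Multiplicative (Fin N → ℤ))) b)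
          = aug13eps k N (algebraMap k _ b) := rfl
      rw [h2, AlgHom.commutes]
      simp [MvPowerSeries.algebraMap_apply]
    · intro g
      show (MvPowerSeries.constantCoeff (σ := Fin N) (R := k)) (aug13phi k N (MonoidAlgebra.single g 1)) = _
      rw [← MonoidAlgebra.of_apply, aug13phi_of, aug13_cc_U]
      exact (aug13eps_of k N g).symm
  exact congrFun (congrArg (fun h => h.toFun) hext) f

/-- ideal of power series with vanishing coefficients below degree `j` -/
def aug13T (j : ℕ) : Ideal (MvPowerSeries (Fin N) k) where
  carrier := {f | ∀ e : Fin N →₀ ℕ, (e.sum fun _ n => n) < j → MvPowerSeries.coeff e f = 0}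
  zero_mem' := by intro e he; simp
  add_mem' := fun hf hg e he => by rw [map_add, hf e he, hg e he, add_zero]
  smul_mem' := fun b f hf e he => by
    rw [smul_eq_mul, MvPowerSeries.coeff_mul]
    refine Finset.sum_eq_zero fun p hp => ?_
    rw [Finset.HasAntidiagonal.mem_antidiagonal] at hp
    have hsum : (p.1.sum fun _ n => n) + (p.2.sum fun _ n => n) = e.sum fun _ n => n := by
      rw [← Finsupp.sum_add_index' (fun _ => rfl) (fun _ _ _ => rfl), hp]
    have : (p.2.sum fun _ n => n) < j := by omega
    rw [hf p.2 this, mul_zero]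

lemma aug13T_mul {a b : ℕ} {f g : MvPowerSeries (Fin N) k}
    (hf : f ∈ aug13T k N a) (hg : g ∈ aug13T k N b) : f * g ∈ aug13T k N (a + b) := by
  intro e he
  rw [MvPowerSeries.coeff_mul]
  refine Finset.sum_eq_zero fun p hp => ?_
  rw [Finset.HasAntidiagonal.mem_antidiagonal] at hp
  have hsum : (p.1.sum fun _ n => n) + (p.2.sum fun _ n => n) = e.sum fun _ n => n := by
    rw [← Finsupp.sum_add_index' (fun _ => rfl) (fun _ _ _ => rfl), hp]
  rcases lt_or_ge (p.1.sum fun _ n => n) a with h | h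
  · rw [hf p.1 h, zero_mul]
  · rw [hg p.2 (by omega), mul_zero]

lemma aug13_mker_le_T :
    RingHom.ker ((MvPowerSeries.constantCoeff (σ := Fin N) (R := k))) ≤ aug13T k N 1 := by
  intro f hf e he
  have he0 : e = 0 := by
    ext a
    have h1 : (e.sum fun _ n => n) = 0 := by omega
    rw [Finsupp.sum] at h1
    by_cases ha : a ∈ e.support
    · exact (Finset.sum_eq_zero_iff.mp h1) a ha
    · simpa using Finsupp.notMem_support_iff.mp ha
  rw [he0, MvPowerSeries.coeff_zero_eq_constantCoeff]
  exact hf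

lemma aug13_mker_pow_le_T (m : ℕ) :
    (RingHom.ker ((MvPowerSeries.constantCoeff (σ := Fin N) (R := k)))) ^ (m + 1) ≤ aug13T k N (m + 1) := by
  induction m with
  | zero => rw [pow_one]; exact aug13_mker_le_T k N
  | succ m ih =>
      rw [pow_succ]
      refine Ideal.mul_le.mpr fun r hr s hs => ?_
      exact aug13T_mul k N (ih hr) (aug13_mker_le_T k N hs)

lemma aug13_vanish {m : ℕ} {f : A} (hf : f ∈ (aug13I k N) ^ (m + 1)) :
    ∀ e : Fin N →₀ ℕ, (e.sum fun _ n => n) < m + 1 → MvPowerSeries.coeff e (aug13phi k N f) = 0 := by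
  have hmap : Ideal.map (aug13phi k N).toRingHom ((aug13I k N) ^ (m + 1))
      ≤ (RingHom.ker ((MvPowerSeries.constantCoeff (σ := Fin N) (R := k)))) ^ (m + 1) := by
    rw [Ideal.map_pow]
    refine Ideal.pow_right_mono (Ideal.map_le_iff_le_comap.mpr fun x hx => ?_) _
    show (MvPowerSeries.constantCoeff (σ := Fin N) (R := k)) (aug13phi k N x) = 0
    rw [aug13_cc_phi]
    exact hx
  have hTm : aug13phi k N f ∈ aug13T k N (m + 1) :=
    aug13_mker_pow_le_T k N m (hmap (Ideal.mem_map_of_mem _ hf))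
  exact hTm

lemma aug13_prod_X_pow (c : Fin N → ℕ) :
    ∏ i, (MvPowerSeries.X i : MvPowerSeries (Fin N) k) ^ c i
      = MvPowerSeries.monomial (Finsupp.equivFunOnFinite.symm c) 1 := by
  classical
  have key : ∀ s : Finset (Fin N), ∏ i ∈ s, (MvPowerSeries.X i : MvPowerSeries (Fin N) k) ^ c i
      = MvPowerSeries.monomial (∑ i ∈ s, Finsupp.single i (c i)) 1 := by
    intro s
    induction s using Finset.induction with
    | empty => simp
    | @insert i s his ih =>
        rw [Finset.prod_insert his, Finset.sum_insert his, ih, MvPowerSeries.X_pow_eq,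
          MvPowerSeries.monomial_mul_monomial, one_mul]
  rw [key Finset.univ]
  have hsum : (∑ i, Finsupp.single i (c i)) = Finsupp.equivFunOnFinite.symm c := by
    ext j
    rw [Finsupp.finset_sum_apply]
    simp [Finsupp.single_apply]
  rw [hsum]

lemma aug13phi_v (a : Fin N → ℕ) :
    aug13phi k N (aug13v k N a)
      = MvPowerSeries.monomial (Finsupp.equivFunOnFinite.symm a) 1 := by
  rw [aug13v, map_prod]
  rw [← aug13_prod_X_pow]
  refine Finset.prod_congr rfl fun i _ => ?_
  rw [map_pow, map_sub, map_one, aug13phi_X]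
  congr 1
  ring

lemma aug13_deg_symm (P : Fin N → ℕ) :
    ((Finsupp.equivFunOnFinite.symm P : Fin N →₀ ℕ).sum fun _ n => n) = ∑ i, P i := by
  rw [Finsupp.sum_fintype _ _ (fun _ => rfl)]
  simp

end AugAux13

/-- The augmentation ideal of the monoid algebra `k[G]`, i.e. the kernel of the
`k`-algebra homomorphism `k[G] → k` sending each `g ∈ G` to `1`, regarded as a
`k`-submodule of `k[G]`. -/
noncomputable def augIdeal (k : Type*) [CommRing k] (G : Type*) [Monoid G] :
    Submodule k (MonoidAlgebra k G) :=
  Submodule.restrictScalars k (RingHom.ker (MonoidAlgebra.lift k k G 1))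

/-- The `d`-th power of the augmentation ideal of `k[G]` (with the usual ideal-theoretic
convention that the zeroth power is the whole ring). -/
noncomputable def augPow (k : Type*) [CommRing k] (G : Type*) [Monoid G] :
    ℕ → Submodule k (MonoidAlgebra k G)
  | 0 => ⊤
  | d + 1 => augIdeal k G ^ (d + 1)

section Final

variable {k : Type*} [CommRing k] {N : ℕ}

lemma aug13_augIdeal_eq :
    augIdeal k (Multiplicative (Fin N → ℤ)) = Submodule.restrictScalars k (aug13I k N) := rfl

lemma aug13_augPow_zero : augPow k (Multiplicative (Fin N → ℤ)) 0 = ⊤ := rfl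

lemma aug13_augPow_succ (d : ℕ) :
    augPow k (Multiplicative (Fin N → ℤ)) (d + 1)
      = Submodule.restrictScalars k (aug13I k N) ^ (d + 1) := rfl

end Final

set_option maxHeartbeats 2000000 in
/-- For `G = ℤ^N` (`N ≥ 1`, written multiplicatively) and every `d`,
the quotient `I_k(G)^d / I_k(G)^{d+1}` of successive powers of the augmentation ideal of
`k[G]` is a free `k`-module of rank `C(N+d-1, d)`. -/
theorem stmt_13 {k : Type*} [CommRing k] (N d : ℕ) (hN : 1 ≤ N) :
    Nonempty (Module.Basis (Fin ((N + d - 1).choose d)) k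
      (↥(augPow k (Multiplicative (Fin N → ℤ)) d) ⧸
        Submodule.comap (augPow k (Multiplicative (Fin N → ℤ)) d).subtype
          (augPow k (Multiplicative (Fin N → ℤ)) (d + 1)))) := by
  classical
  cases d with
  | zero =>
      -- the quotient is `k[G]/I ≅ k`
      set J : Submodule k (MonoidAlgebra k (Multiplicative (Fin N → ℤ))) :=
        augPow k (Multiplicative (Fin N → ℤ)) 1 with hJ
      have htop : augPow k (Multiplicative (Fin N → ℤ)) 0 = ⊤ := rfl
      rw [htop]
      have hmap : Submodule.map
          ((Submodule.topEquiv :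
            (⊤ : Submodule k (MonoidAlgebra k (Multiplicative (Fin N → ℤ)))) ≃ₗ[k] _) : _ →ₗ[k] _)
          (Submodule.comap (⊤ : Submodule k (MonoidAlgebra k (Multiplicative (Fin N → ℤ)))).subtype J)
          = J := by
        ext y
        constructor
        · rintro ⟨x, hx, rfl⟩
          exact hx
        · intro hy
          exact ⟨⟨y, trivial⟩, hy, rfl⟩
      have E1 := Submodule.Quotient.equiv
        (Submodule.comap (⊤ : Submodule k (MonoidAlgebra k (Multiplicative (Fin N → ℤ)))).subtype J)
        J Submodule.topEquiv hmap
      -- J = ker of the augmentation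
      have hJeq : J = LinearMap.ker (aug13eps k N).toLinearMap := by
        rw [hJ, aug13_augPow_succ, pow_one]
        rfl
      have hsurj : Function.Surjective (aug13eps k N).toLinearMap := by
        intro c
        exact ⟨algebraMap k _ c, (aug13eps k N).commutes c⟩
      have E2 := LinearMap.quotKerEquivOfSurjective _ hsurj
      have E3 := E1.trans ((Submodule.quotEquivOfEq _ _ hJeq).trans E2)
      exact ⟨(Module.Basis.singleton (Fin 1) k).map E3.symm |>.reindex
        (finCongr (by simp))⟩
  | succ e =>
      set G' := Multiplicative (Fin N → ℤ)
      set J : Submodule k (MonoidAlgebra k G') :=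
        Submodule.restrictScalars k (aug13I k N) with hJ
      have h1 : augPow k G' (e + 1) = J ^ (e + 1) := rfl
      have h2 : augPow k G' (e + 1 + 1) = J ^ (e + 2) := rfl
      rw [h1, h2]
      -- index type
      set S := {P : Fin N → ℕ // ∑ i, P i = e + 1} with hS
      haveI : Fintype S := Fintype.ofEquiv (Sym (Fin N) (e + 1))
        (Sym.equivNatSumOfFintype (Fin N) (e + 1))
      have hcard : Fintype.card S = (N + (e + 1) - 1).choose (e + 1) := by
        rw [← Fintype.card_congr (Sym.equivNatSumOfFintype (Fin N) (e + 1)),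
          Sym.card_sym_eq_choose, Fintype.card_fin]
      -- the quotient module
      set Q := (↥(J ^ (e + 1)) ⧸
        Submodule.comap (J ^ (e + 1)).subtype (J ^ (e + 2))) with hQ
      -- membership of the basic monomials
      have hvJ : ∀ a : S, aug13v k N a.1 ∈ J ^ (e + 1) := by
        intro a
        have := aug13v_mem k N a.1
        rwa [a.2] at this
      -- the two linear maps
      set w : S → Q := fun a => Submodule.Quotient.mk ⟨aug13v k N a.1, hvJ a⟩ with hw
      set Ψ : (S →₀ k) →ₗ[k] Q := Finsupp.linearCombination k w with hΨ
      set L : MonoidAlgebra k G' →ₗ[k] (S →₀ k) :=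
        (Finsupp.linearEquivFunOnFinite k k S).symm.toLinearMap ∘ₗ
          LinearMap.pi (fun a : S =>
            (MvPowerSeries.coeff (Finsupp.equivFunOnFinite.symm a.1)) ∘ₗ
              (aug13phi k N).toLinearMap) with hL
      have hLapply : ∀ (f : MonoidAlgebra k G') (a : S),
          L f a = MvPowerSeries.coeff (Finsupp.equivFunOnFinite.symm a.1) (aug13phi k N f) := by
        intro f a
        rfl
      have hker : Submodule.comap (J ^ (e + 1)).subtype (J ^ (e + 2))
          ≤ LinearMap.ker (L ∘ₗ (J ^ (e + 1)).subtype) := by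
        intro x hx
        have hx2 : (x : MonoidAlgebra k G') ∈ (aug13I k N) ^ (e + 2) := by
          have hmem : (x : MonoidAlgebra k G')
              ∈ Submodule.restrictScalars k (aug13I k N) ^ (e + 2) := hx
          rwa [aug13_rs_pow k N (e + 1)] at hmem
        rw [LinearMap.mem_ker]
        ext a
        have hca : (L ∘ₗ (J ^ (e + 1)).subtype) x a
            = MvPowerSeries.coeff (Finsupp.equivFunOnFinite.symm a.1)
              (aug13phi k N (x : MonoidAlgebra k G')) := rfl
        rw [hca, aug13_vanish k N hx2 (Finsupp.equivFunOnFinite.symm a.1)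
          (by rw [aug13_deg_symm, a.2]; omega)]
        rfl
      set Φ : Q →ₗ[k] (S →₀ k) :=
        Submodule.liftQ (Submodule.comap (J ^ (e + 1)).subtype (J ^ (e + 2)))
          (L ∘ₗ (J ^ (e + 1)).subtype) hker with hΦ
      -- computation of `L` on monomials
      have hLv : ∀ a : S, L (aug13v k N a.1) = Finsupp.single a 1 := by
        intro a
        have hfun : (fun b : S =>
            MvPowerSeries.coeff (Finsupp.equivFunOnFinite.symm b.1) (aug13phi k N (aug13v k N a.1)))
            = ⇑(Finsupp.single a (1 : k)) := by
          funext b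
          rw [aug13phi_v, MvPowerSeries.coeff_monomial]
          rw [Finsupp.single_apply]
          by_cases h : b = a
          · subst h; simp
          · have h1 : Finsupp.equivFunOnFinite.symm b.1 ≠ Finsupp.equivFunOnFinite.symm a.1 := by
              intro hc
              exact h (Subtype.ext (Finsupp.equivFunOnFinite.symm.injective hc))
            have h2 : a ≠ b := fun hc => h hc.symm
            rw [if_neg h1, if_neg h2]
        have : L (aug13v k N a.1)
            = (Finsupp.linearEquivFunOnFinite k k S).symm (fun b : S =>
              MvPowerSeries.coeff (Finsupp.equivFunOnFinite.symm b.1)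
                (aug13phi k N (aug13v k N a.1))) := rfl
        rw [this, hfun]
        exact (Finsupp.linearEquivFunOnFinite k k S).symm_apply_apply (Finsupp.single a 1)
      -- Φ ∘ Ψ = id
      have hΦΨ : Φ ∘ₗ Ψ = LinearMap.id := by
        apply Finsupp.lhom_ext'
        intro a
        apply LinearMap.ext_ring
        rw [LinearMap.comp_apply, LinearMap.comp_apply, Finsupp.lsingle_apply]
        rw [hΨ, Finsupp.linearCombination_single, one_smul, hw]
        rw [hΦ, Submodule.liftQ_apply, LinearMap.comp_apply]
        rw [show ((J ^ (e + 1)).subtype ⟨aug13v k N a.1, hvJ a⟩) = aug13v k N a.1 from rfl]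
        rw [hLv]
        rfl
      -- Ψ is surjective
      have hΨsurj : Function.Surjective Ψ := by
        rw [← LinearMap.range_eq_top, hΨ, Finsupp.range_linearCombination, eq_top_iff]
        rintro x -
        obtain ⟨⟨y, hy⟩, rfl⟩ := Submodule.Quotient.mk_surjective _ x
        have hy2 : y ∈ aug13V k N (e + 1) ⊔ Submodule.restrictScalars k ((aug13I k N) ^ (e + 2)) := by
          apply aug13_pow_le k N e
          rwa [← hJ]
        obtain ⟨v, hv, r, hr, rfl⟩ := Submodule.mem_sup.mp hy2
        have hvJ1 : v ∈ J ^ (e + 1) := by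
          rw [hJ]; exact aug13V_le_pow k N (e + 1) hv
        have hrJ2 : r ∈ J ^ (e + 2) := by
          rw [hJ, aug13_rs_pow k N (e + 1)]; exact hr
        have hrJ1 : r ∈ J ^ (e + 1) := by
          rw [hJ, aug13_rs_pow k N e, aug13_rs_pow k N (e + 1)] at *
          exact Ideal.pow_le_pow_right (by omega) hrJ2
        have hsplit : Submodule.Quotient.mk (p := Submodule.comap (J ^ (e + 1)).subtype (J ^ (e + 2)))
            (⟨v + r, hy⟩ : ↥(J ^ (e + 1))) = Submodule.Quotient.mk ⟨v, hvJ1⟩ := by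
          rw [Submodule.Quotient.eq]
          have : (⟨v + r, hy⟩ - ⟨v, hvJ1⟩ : ↥(J ^ (e + 1))) = ⟨r, hrJ1⟩ := by
            ext; simp
          rw [this]
          exact hrJ2
        rw [hsplit]
        -- span induction
        have main : ∀ v, v ∈ aug13V k N (e + 1) →
            v ∈ J ^ (e + 1) ∧ ∀ (hm : v ∈ J ^ (e + 1)),
              Submodule.Quotient.mk (p := Submodule.comap (J ^ (e + 1)).subtype (J ^ (e + 2)))
                (⟨v, hm⟩ : ↥(J ^ (e + 1))) ∈ Submodule.span k (Set.range w) := by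
          intro v hv
          refine Submodule.span_induction ?_ ?_ ?_ ?_ hv
          · rintro x ⟨a, ha, rfl⟩
            have haS : ∑ i, a i = e + 1 := ha
            have hxJ : aug13v k N a ∈ J ^ (e + 1) := hvJ ⟨a, haS⟩
            refine ⟨hxJ, fun hm => ?_⟩
            have : (⟨aug13v k N a, hm⟩ : ↥(J ^ (e + 1))) = ⟨aug13v k N a, hvJ ⟨a, haS⟩⟩ := rfl
            rw [this]
            exact Submodule.subset_span ⟨⟨a, haS⟩, rfl⟩
          · exact ⟨Submodule.zero_mem _, fun hm => by
              rw [show (⟨0, hm⟩ : ↥(J ^ (e + 1))) = 0 from rfl, Submodule.Quotient.mk_zero]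
              exact Submodule.zero_mem _⟩
          · rintro x y hxs hys ⟨hx1, hx2⟩ ⟨hy1, hy2⟩
            refine ⟨Submodule.add_mem _ hx1 hy1, fun hm => ?_⟩
            have : (⟨x + y, hm⟩ : ↥(J ^ (e + 1))) = ⟨x, hx1⟩ + ⟨y, hy1⟩ := rfl
            rw [this, Submodule.Quotient.mk_add]
            exact Submodule.add_mem _ (hx2 hx1) (hy2 hy1)
          · rintro c x hxs ⟨hx1, hx2⟩
            refine ⟨Submodule.smul_mem _ c hx1, fun hm => ?_⟩
            have : (⟨c • x, hm⟩ : ↥(J ^ (e + 1))) = c • ⟨x, hx1⟩ := rfl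
            rw [this, Submodule.Quotient.mk_smul]
            exact Submodule.smul_mem _ c (hx2 hx1)
        exact (main v hv).2 hvJ1
      -- Ψ ∘ Φ = id
      have hΨΦ : Ψ ∘ₗ Φ = LinearMap.id := by
        apply LinearMap.ext
        intro m
        obtain ⟨x, rfl⟩ := hΨsurj m
        rw [LinearMap.comp_apply, LinearMap.id_apply]
        rw [show Φ (Ψ x) = (Φ ∘ₗ Ψ) x from rfl, hΦΨ]
        rfl
      exact ⟨(Finsupp.basisSingleOne.map
        (LinearEquiv.ofLinear Ψ Φ hΨΦ hΦΨ)).reindex (Fintype.equivFinOfCardEq hcard)⟩
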